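/- Let $D := S_\kappa \cap [\ell,u] \subset \mathbb{R}^n$ with $0 \in [\ell_i,u_i]$ for all $i$, and let $w \in \mathbb{R}^n$. Then $y \in \Pi_D(w)$ (i.e., $y$ minimizes $\|z-w\|$ over $z \in D$) if and only if there exists an index set $I \subset \{1,\ldots,n\}$ with $|I| = \kappa$ such that $d_i(w) \ge d_j(w)$ for all $i \in I$ and $j \notin I$, and $y = p^I(w)$. -/

import Mathlib

/-- Projection of a real number onto the interval `[l, u]`. -/
noncomputable def projInt (l u t : ℝ) : ℝ := max l (min t u)

/-- The number of nonzero components of a vector. -/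
noncomputable def zeroNorm {n : ℕ} (w : Fin n → ℝ) : ℕ := Set.ncard {i | w i ≠ 0}

lemma projInt_mem {l u : ℝ} (h : l ≤ u) (w : ℝ) : l ≤ projInt l u w ∧ projInt l u w ≤ u :=
  ⟨le_max_left _ _, max_le h (min_le_right _ _)⟩

lemma projInt_sq_le {l u : ℝ} (h : l ≤ u) (w t : ℝ) (htl : l ≤ t) (htu : t ≤ u) :
    (projInt l u w - w)^2 ≤ (t - w)^2 := by
  unfold projInt
  rcases le_total w l with h1 | h1
  · rw [min_eq_left (h1.trans h), max_eq_left h1]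
    nlinarith
  · rcases le_total w u with h2 | h2
    · rw [min_eq_left h2, max_eq_right h1]
      nlinarith
    · rw [min_eq_right h2, max_eq_right h]
      nlinarith

lemma projInt_sq_eq {l u : ℝ} (h : l ≤ u) (w t : ℝ) (htl : l ≤ t) (htu : t ≤ u)
    (heq : (t - w)^2 ≤ (projInt l u w - w)^2) : t = projInt l u w := by
  unfold projInt at *
  rcases le_total w l with h1 | h1
  · rw [min_eq_left (h1.trans h), max_eq_left h1] at *
    have : t ≤ l := by nlinarith
    linarith
  · rcases le_total w u with h2 | h2
    · rw [min_eq_left h2, max_eq_right h1] at *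
      nlinarith [sq_nonneg (t - w)]
    · rw [min_eq_right h2, max_eq_right h] at *
      have : u ≤ t := by nlinarith
      linarith

lemma key_lower {n : ℕ} (l u w d z : Fin n → ℝ)
    (hlu : ∀ i, l i ≤ u i)
    (hd : ∀ i, d i = (w i) ^ 2 - (projInt (l i) (u i) (w i) - w i) ^ 2)
    (hz : ∀ i, l i ≤ z i ∧ z i ≤ u i)
    (J : Finset (Fin n)) (hJ : ∀ i, z i ≠ 0 → i ∈ J) :
    (∑ i, (w i)^2) - ∑ i ∈ J, d i ≤ ∑ i, (z i - w i)^2 := by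
  have hs : ∑ i ∈ J, d i = ∑ i, (if i ∈ J then d i else 0) := by
    rw [Finset.sum_ite_mem]
    simp
  have key : ∑ i, (w i)^2 ≤ ∑ i, ((z i - w i)^2 + if i ∈ J then d i else 0) := by
    apply Finset.sum_le_sum
    intro i _
    by_cases hi : i ∈ J
    · simp only [hi, if_true]
      have := projInt_sq_le (hlu i) (w i) (z i) (hz i).1 (hz i).2
      rw [hd i]; nlinarith
    · have hzi : z i = 0 := by by_contra hc; exact hi (hJ i hc)
      simp [hi, hzi]
  rw [Finset.sum_add_distrib] at key
  rw [hs]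
  linarith

lemma key_eq {n : ℕ} (l u w d y : Fin n → ℝ)
    (hd : ∀ i, d i = (w i) ^ 2 - (projInt (l i) (u i) (w i) - w i) ^ 2)
    (I : Finset (Fin n))
    (hy : ∀ i, y i = if i ∈ I then projInt (l i) (u i) (w i) else 0) :
    ∑ i, (y i - w i)^2 = (∑ i, (w i)^2) - ∑ i ∈ I, d i := by
  have hs : ∑ i ∈ I, d i = ∑ i, (if i ∈ I then d i else 0) := by
    rw [Finset.sum_ite_mem]; simp
  rw [hs, ← Finset.sum_sub_distrib]
  apply Finset.sum_congr rfl
  intro i _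
  by_cases hi : i ∈ I
  · simp only [hi, if_true, hy i, hd i]; ring
  · simp [hi, hy i]

lemma sum_le_of_pairwise {n : ℕ} (d : Fin n → ℝ) (I J : Finset (Fin n))
    (hcard : J.card = I.card)
    (hmax : ∀ i ∈ I, ∀ j ∉ I, d j ≤ d i) :
    ∑ i ∈ J, d i ≤ ∑ i ∈ I, d i := by
  have hJsplit : ∑ i ∈ J, d i = ∑ i ∈ J ∩ I, d i + ∑ i ∈ J \ I, d i := by
    rw [← Finset.sum_union (Finset.disjoint_sdiff_inter J I).symm]
    · congr 1
      rw [Finset.union_comm, Finset.sdiff_union_inter]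
  have hIsplit : ∑ i ∈ I, d i = ∑ i ∈ J ∩ I, d i + ∑ i ∈ I \ J, d i := by
    rw [Finset.inter_comm]
    rw [← Finset.sum_union (Finset.disjoint_sdiff_inter I J).symm]
    congr 1
    rw [Finset.union_comm, Finset.sdiff_union_inter]
  have hc : (J \ I).card = (I \ J).card := by
    have h1 := Finset.card_inter_add_card_sdiff J I
    have h2 := Finset.card_inter_add_card_sdiff I J
    rw [Finset.inter_comm I J] at h2
    omega
  rw [hJsplit, hIsplit]
  have : ∑ i ∈ J \ I, d i ≤ ∑ i ∈ I \ J, d i := by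
    rcases Finset.eq_empty_or_nonempty (I \ J) with he | hne
    · have : J \ I = ∅ := Finset.card_eq_zero.1 (by rw [hc, he, Finset.card_empty])
      rw [this, he]
    · obtain ⟨i0, hi0, hmin⟩ := Finset.exists_min_image (I \ J) d hne
      have h1 : ∑ i ∈ J \ I, d i ≤ (J \ I).card • d i0 := by
        apply Finset.sum_le_card_nsmul
        intro j hj
        exact hmax i0 (Finset.mem_sdiff.1 hi0).1 j (Finset.mem_sdiff.1 hj).2
      have h2 : (I \ J).card • d i0 ≤ ∑ i ∈ I \ J, d i := by
        apply Finset.card_nsmul_le_sum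
        intro i hi
        exact hmin i hi
      rw [hc] at h1
      linarith
  linarith

lemma norm_le_iff_sum {n : ℕ} (a b : EuclideanSpace ℝ (Fin n)) :
    ‖a‖ ≤ ‖b‖ ↔ ∑ i, (a i)^2 ≤ ∑ i, (b i)^2 := by
  rw [EuclideanSpace.norm_eq, EuclideanSpace.norm_eq]
  simp only [Real.norm_eq_abs, sq_abs]
  exact Real.sqrt_le_sqrt_iff (by positivity)

lemma zeroNorm_le_iff {n : ℕ} (z : Fin n → ℝ) (κ : ℕ) :
    zeroNorm z ≤ κ ↔ (Finset.univ.filter fun i => z i ≠ 0).card ≤ κ := by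
  unfold zeroNorm
  have : {i | z i ≠ 0} = ↑(Finset.univ.filter fun i => z i ≠ 0) := by ext i; simp
  rw [this, Set.ncard_coe_finset]

lemma extend_supp {n : ℕ} (κ : ℕ) (hκ : κ ≤ n) (z : Fin n → ℝ)
    (hz : zeroNorm z ≤ κ) :
    ∃ J : Finset (Fin n), (∀ i, z i ≠ 0 → i ∈ J) ∧ J.card = κ := by
  rw [zeroNorm_le_iff] at hz
  obtain ⟨J, hJ1, _, hJ3⟩ := Finset.exists_subsuperset_card_eq
    (Finset.subset_univ (Finset.univ.filter fun i => z i ≠ 0)) hz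
    (by simp [Finset.card_univ, hκ])
  exact ⟨J, fun i hi => hJ1 (by simp [hi]), hJ3⟩


theorem stmt_5 {n : ℕ} (κ : ℕ) (hκ1 : 1 ≤ κ) (hκn : κ ≤ n - 1)
    (l u : Fin n → ℝ) (hlu : ∀ i, l i < u i) (h0 : ∀ i, l i ≤ 0 ∧ 0 ≤ u i)
    (w y : EuclideanSpace ℝ (Fin n))
    (d : Fin n → ℝ)
    (hd : ∀ i, d i = (w i) ^ 2 - (projInt (l i) (u i) (w i) - w i) ^ 2) :
    ((zeroNorm (y : Fin n → ℝ) ≤ κ ∧ ∀ i, l i ≤ y i ∧ y i ≤ u i) ∧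
      ∀ z : EuclideanSpace ℝ (Fin n),
        (zeroNorm (z : Fin n → ℝ) ≤ κ ∧ ∀ i, l i ≤ z i ∧ z i ≤ u i) →
          ‖y - w‖ ≤ ‖z - w‖) ↔
    ∃ I : Finset (Fin n), I.card = κ ∧
      (∀ i ∈ I, ∀ j ∉ I, d j ≤ d i) ∧
      (∀ i, y i = if i ∈ I then projInt (l i) (u i) (w i) else 0) := by
  have hlu' : ∀ i, l i ≤ u i := fun i => (hlu i).le
  have hκle : κ ≤ n := hκn.trans (Nat.sub_le n 1)
  have hsub : ∀ (a b : EuclideanSpace ℝ (Fin n)) (i : Fin n), (a - b) i = a i - b i :=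
    fun _ _ _ => rfl
  set S := ∑ i, (w i)^2 with hS
  -- feasibility of a vector of the form p^I
  have hfeas : ∀ I : Finset (Fin n), I.card = κ →
      ∀ v : EuclideanSpace ℝ (Fin n),
      (∀ i, v i = if i ∈ I then projInt (l i) (u i) (w i) else 0) →
      zeroNorm (v : Fin n → ℝ) ≤ κ ∧ ∀ i, l i ≤ v i ∧ v i ≤ u i := by
    intro I hIcard v hv
    constructor
    · rw [zeroNorm_le_iff]
      refine le_trans (Finset.card_le_card ?_) hIcard.le
      intro i hi
      simp only [Finset.mem_filter, Finset.mem_univ, true_and] at hi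
      by_contra hc
      rw [hv i, if_neg hc] at hi
      exact hi rfl
    · intro i
      rw [hv i]
      by_cases hi : i ∈ I
      · simp only [hi, if_true]
        exact projInt_mem (hlu' i) (w i)
      · simp only [hi, if_false]
        exact h0 i
  constructor
  · rintro ⟨⟨hy0, hybox⟩, hmin⟩
    -- a maximizing κ-subset
    obtain ⟨J0, _, hJ0card⟩ := Finset.exists_subset_card_eq
      (s := (Finset.univ : Finset (Fin n))) (n := κ) (by simp [Finset.card_univ, hκle])
    obtain ⟨I0, hI0mem, hI0max⟩ := Finset.exists_max_image
      (Finset.univ.powerset.filter fun J => J.card = κ) (fun J => ∑ i ∈ J, d i)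
      ⟨J0, by simp [hJ0card]⟩
    have hI0card : I0.card = κ := (Finset.mem_filter.1 hI0mem).2
    set M := ∑ i ∈ I0, d i with hM
    -- compare y with p^{I0}
    set p0 : EuclideanSpace ℝ (Fin n) :=
      WithLp.toLp 2 (fun i => if i ∈ I0 then projInt (l i) (u i) (w i) else 0 : Fin n → ℝ) with hp0
    have hp0def : ∀ i, p0 i = if i ∈ I0 then projInt (l i) (u i) (w i) else 0 := fun _ => rfl
    have h1 : ∑ i, (y i - w i)^2 ≤ S - M := by
      have := hmin p0 (hfeas I0 hI0card p0 hp0def)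
      rw [norm_le_iff_sum] at this
      simp only [hsub] at this
      rw [key_eq l u w d p0 hd I0 hp0def] at this
      exact this
    -- extend the support of y
    obtain ⟨J, hJsupp, hJcard⟩ := extend_supp κ hκle y hy0
    have hJmem : J ∈ Finset.univ.powerset.filter fun J => J.card = κ := by
      simp [hJcard]
    have h2 : S - ∑ i ∈ J, d i ≤ ∑ i, (y i - w i)^2 :=
      key_lower l u w d y hlu' hd hybox J hJsupp
    have h3 : ∑ i ∈ J, d i ≤ M := hI0max J hJmem
    have hJM : ∑ i ∈ J, d i = M := le_antisymm h3 (by linarith)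
    have hyeq : ∑ i, (y i - w i)^2 = S - ∑ i ∈ J, d i := by linarith
    refine ⟨J, hJcard, ?_, ?_⟩
    · -- pairwise maximality by exchange
      intro i hi j hj
      classical
      set J' := insert j (J.erase i) with hJ'
      have hjnotin : j ∉ J.erase i := fun hc => hj (Finset.mem_of_mem_erase hc)
      have hJ'card : J'.card = κ := by
        rw [hJ', Finset.card_insert_of_notMem hjnotin, Finset.card_erase_of_mem hi, hJcard]
        omega
      have hJ'mem : J' ∈ Finset.univ.powerset.filter fun J => J.card = κ := by
        simp [hJ'card]
      have hsum' : ∑ k ∈ J', d k = d j + (∑ k ∈ J, d k - d i) := by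
        rw [hJ', Finset.sum_insert hjnotin]
        have := Finset.add_sum_erase J d hi
        linarith
      have := hI0max J' hJ'mem
      rw [hsum', hJM] at this
      linarith [hJM]
    · -- identify y coordinatewise
      intro i
      have hterm : ∀ k ∈ Finset.univ,
          (0:ℝ) ≤ (y k - w k)^2 + (if k ∈ J then d k else 0) - (w k)^2 := by
        intro k _
        by_cases hk : k ∈ J
        · simp only [hk, if_true]
          have := projInt_sq_le (hlu' k) (w k) (y k) (hybox k).1 (hybox k).2
          rw [hd k]; nlinarith
        · have hyk : y k = 0 := by
            by_contra hc; exact hk (hJsupp k hc)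
          simp [hk, hyk]
      have hsum0 : ∑ k, ((y k - w k)^2 + (if k ∈ J then d k else 0) - (w k)^2) = 0 := by
        have hs : ∑ k ∈ J, d k = ∑ k, (if k ∈ J then d k else 0) := by
          rw [Finset.sum_ite_mem]; simp
        simp only [Finset.sum_sub_distrib, Finset.sum_add_distrib]
        rw [← hs]
        rw [hyeq, ← hS]
        ring
      have hzero := (Finset.sum_eq_zero_iff_of_nonneg hterm).1 hsum0 i (Finset.mem_univ i)
      by_cases hi : i ∈ J
      · simp only [hi, if_true] at hzero ⊢
        have heq : (y i - w i)^2 = (projInt (l i) (u i) (w i) - w i)^2 := by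
          rw [hd i] at hzero; linarith
        exact projInt_sq_eq (hlu' i) (w i) (y i) (hybox i).1 (hybox i).2 heq.le
      · simp only [hi, if_false]
        by_contra hc
        exact hi (hJsupp i hc)
  · rintro ⟨I, hIcard, hImax, hyI⟩
    refine ⟨hfeas I hIcard y hyI, ?_⟩
    intro z ⟨hz0, hzbox⟩
    obtain ⟨J, hJsupp, hJcard⟩ := extend_supp κ hκle z hz0
    have h1 : S - ∑ i ∈ J, d i ≤ ∑ i, (z i - w i)^2 :=
      key_lower l u w d z hlu' hd hzbox J hJsupp
    have h2 : ∑ i ∈ J, d i ≤ ∑ i ∈ I, d i :=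
      sum_le_of_pairwise d I J (by rw [hJcard, hIcard]) hImax
    have h3 : ∑ i, (y i - w i)^2 = S - ∑ i ∈ I, d i :=
      key_eq l u w d y hd I hyI
    rw [norm_le_iff_sum]
    simp only [hsub]
    linarith
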